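/- arXiv:2604.02290 — 4 statements merged into one kernel-verified Lean document; each statement's English description precedes it below -/
import Mathlib

section
/- Fix m ∈ ℝᵈ and v ∈ ℝᵈ with nonnegative entries. The map t ↦ ⟨m, g_t(m,v)⟩ is differentiable on (0,∞) and satisfies, for every t > 0, d/dt ⟨m, g_t(m,v)⟩ ≤ ( −(1−α)/(e^{(1−α)t} − 1) + ((1−β)/2) · 1/(e^{(1−β)t} − 1) ) · ⟨m, g_t(m,v)⟩. (Time-derivative bound, equation (A.14) in the proof of Theorem 1.) -/
open MeasureTheory Filter
open scoped RealInnerProductSpace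

/-- The Adam update direction `g_t(m, v)`, defined coordinatewise by
`g_t(m,v)_i = (m_i/(1−e^{−(1−α)t})) / (√(v_i/(1−e^{−(1−β)t})) + ε)`. -/
noncomputable def adamG (α β ε : ℝ) (d : ℕ) (t : ℝ) (m v : EuclideanSpace ℝ (Fin d)) :
    EuclideanSpace ℝ (Fin d) :=
  WithLp.toLp 2 (fun i => (m i / (1 - Real.exp (-(1 - α) * t))) /
    (Real.sqrt (v i / (1 - Real.exp (-(1 - β) * t))) + ε))

set_option maxHeartbeats 1000000 in
lemma adam_coord (α β ε : ℝ) (hα1 : α < 1) (hβ1 : β < 1) (hε : 0 < ε)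
    (t : ℝ) (ht : 0 < t) (mi vi : ℝ) (hvi : 0 ≤ vi) :
    ∃ D : ℝ, HasDerivAt (fun s => mi * ((mi / (1 - Real.exp (-(1 - α) * s))) /
        (Real.sqrt (vi / (1 - Real.exp (-(1 - β) * s))) + ε))) D t ∧
      D ≤ (-(1 - α) / (Real.exp ((1 - α) * t) - 1)
          + ((1 - β) / 2) * (1 / (Real.exp ((1 - β) * t) - 1)))
        * (mi * ((mi / (1 - Real.exp (-(1 - α) * t))) /
            (Real.sqrt (vi / (1 - Real.exp (-(1 - β) * t))) + ε))) := by
  have ha : (0:ℝ) < 1 - α := by linarith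
  have hb : (0:ℝ) < 1 - β := by linarith
  have hE1 : (0:ℝ) < Real.exp (-(1 - α) * t) := Real.exp_pos _
  have hE2 : (0:ℝ) < Real.exp (-(1 - β) * t) := Real.exp_pos _
  have hE1lt : Real.exp (-(1 - α) * t) < 1 := by
    rw [Real.exp_lt_one_iff]; nlinarith
  have hE2lt : Real.exp (-(1 - β) * t) < 1 := by
    rw [Real.exp_lt_one_iff]; nlinarith
  have hA : (0:ℝ) < 1 - Real.exp (-(1 - α) * t) := by linarith
  have hB : (0:ℝ) < 1 - Real.exp (-(1 - β) * t) := by linarith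
  have hsB : (0:ℝ) < Real.sqrt (1 - Real.exp (-(1 - β) * t)) := Real.sqrt_pos.mpr hB
  have hw : (0:ℝ) ≤ Real.sqrt vi := Real.sqrt_nonneg _
  have hq : (0:ℝ) < Real.sqrt vi / Real.sqrt (1 - Real.exp (-(1 - β) * t)) + ε := by positivity
  -- derivatives
  have hda : HasDerivAt (fun s : ℝ => 1 - Real.exp (-(1 - α) * s))
      ((1 - α) * Real.exp (-(1 - α) * t)) t := by
    have h1 : HasDerivAt (fun s : ℝ => -(1 - α) * s) (-(1 - α)) t := by
      simpa using (hasDerivAt_id t).const_mul (-(1 - α))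
    have h3 := h1.exp.const_sub 1
    exact h3.congr_deriv (by ring)
  have hdb : HasDerivAt (fun s : ℝ => 1 - Real.exp (-(1 - β) * s))
      ((1 - β) * Real.exp (-(1 - β) * t)) t := by
    have h1 : HasDerivAt (fun s : ℝ => -(1 - β) * s) (-(1 - β)) t := by
      simpa using (hasDerivAt_id t).const_mul (-(1 - β))
    have h3 := h1.exp.const_sub 1
    exact h3.congr_deriv (by ring)
  have hdsb := hdb.sqrt hB.ne'
  have hdq := ((hasDerivAt_const t (Real.sqrt vi)).div hdsb hsB.ne').add_const ε
  have hdn := (hasDerivAt_const t mi).div hda hA.ne'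
  have hdh := (hdn.div hdq hq.ne').const_mul mi
  have hfun : (fun s => mi * ((mi / (1 - Real.exp (-(1 - α) * s))) /
        (Real.sqrt (vi / (1 - Real.exp (-(1 - β) * s))) + ε)))
      = (fun s => mi * ((mi / (1 - Real.exp (-(1 - α) * s))) /
        (Real.sqrt vi / Real.sqrt (1 - Real.exp (-(1 - β) * s)) + ε))) := by
    funext s; rw [Real.sqrt_div hvi]
  -- clean derivative value
  set E1 := Real.exp (-(1 - α) * t) with hE1def
  set E2 := Real.exp (-(1 - β) * t) with hE2def
  set sB := Real.sqrt (1 - E2) with hsBdef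
  set w := Real.sqrt vi with hwdef
  set q := w / sB + ε with hqdef
  have hdh' : HasDerivAt (fun s => mi * ((mi / (1 - Real.exp (-(1 - α) * s))) /
        (Real.sqrt (vi / (1 - Real.exp (-(1 - β) * s))) + ε)))
      (-(mi ^ 2 * (1 - α) * E1) / ((1 - E1) ^ 2 * q)
        + mi ^ 2 * w * (1 - β) * E2 / (2 * (1 - E1) * sB ^ 3 * q ^ 2)) t := by
    rw [hfun]
    refine hdh.congr_deriv ?_
    simp only [Pi.div_apply, ← hE1def, ← hE2def, ← hsBdef, ← hqdef]
    field_simp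
    ring
  refine ⟨_, hdh', ?_⟩
  -- rewrite right-hand side
  have hsB2 : sB ^ 2 = 1 - E2 := Real.sq_sqrt hB.le
  have hx1 : Real.exp ((1 - α) * t) - 1 = (1 - E1) / E1 := by
    have hm : Real.exp ((1 - α) * t) * E1 = 1 := by
      rw [hE1def, ← Real.exp_add, ← Real.exp_zero]; ring_nf
    field_simp
    nlinarith [hm]
  have hx2 : Real.exp ((1 - β) * t) - 1 = sB ^ 2 / E2 := by
    have hm : Real.exp ((1 - β) * t) * E2 = 1 := by
      rw [hE2def, ← Real.exp_add, ← Real.exp_zero]; ring_nf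
    rw [hsB2]
    field_simp
    nlinarith [hm]
  rw [hx1, hx2, Real.sqrt_div hvi, ← hsBdef, ← hwdef]
  have hRf : (-(1 - α) / ((1 - E1) / E1) + (1 - β) / 2 * (1 / (sB ^ 2 / E2)))
        * (mi * ((mi / (1 - E1)) / q))
      = -(mi ^ 2 * (1 - α) * E1) / ((1 - E1) ^ 2 * q)
        + mi ^ 2 * (1 - β) * E2 / (2 * sB ^ 2 * (1 - E1) * q) := by
    field_simp
  rw [hRf]
  have hwq : w ≤ sB * q := by
    have : sB * q = w + sB * ε := by
      rw [hqdef]; field_simp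
    nlinarith
  have h2 : mi ^ 2 * w * (1 - β) * E2 / (2 * (1 - E1) * sB ^ 3 * q ^ 2)
      ≤ mi ^ 2 * (1 - β) * E2 / (2 * sB ^ 2 * (1 - E1) * q) := by
    have hd1 : (0:ℝ) < 2 * (1 - E1) * sB ^ 3 * q ^ 2 := by positivity
    have hd2 : (0:ℝ) < 2 * sB ^ 2 * (1 - E1) * q := by positivity
    rw [div_le_div_iff₀ hd1 hd2]
    have hK : (0:ℝ) ≤ mi ^ 2 * (1 - β) * E2 * (2 * (1 - E1) * sB ^ 2 * q) := by positivity
    nlinarith [mul_le_mul_of_nonneg_left hwq hK]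
  linarith

/-- **Time-derivative bound (equation (A.14))** in the proof of Theorem 1. Fix `m ∈ ℝᵈ` and an
entrywise nonnegative `v ∈ ℝᵈ`. Then `t ↦ ⟨m, g_t(m,v)⟩` is differentiable on `(0,∞)` and
its derivative is at most
`(−(1−α)/(e^{(1−α)t} − 1) + ((1−β)/2)·1/(e^{(1−β)t} − 1)) · ⟨m, g_t(m,v)⟩`. -/
theorem adamG_time_derivative_bound
    (d : ℕ) (α β ε η : ℝ)
    (hα : α ∈ Set.Ico (0 : ℝ) 1) (hβ : β ∈ Set.Ico (0 : ℝ) 1) (hε : 0 < ε) (hη : 0 < η)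
    (m v : EuclideanSpace ℝ (Fin d)) (hv : ∀ i, 0 ≤ v i) :
    ∀ t > (0 : ℝ), ∃ D : ℝ,
      HasDerivAt (fun s => ⟪m, adamG α β ε d s m v⟫) D t ∧
      D ≤ (-(1 - α) / (Real.exp ((1 - α) * t) - 1)
          + ((1 - β) / 2) * (1 / (Real.exp ((1 - β) * t) - 1)))
        * ⟪m, adamG α β ε d t m v⟫ := by
  intro t ht
  choose D hD hDle using fun i : Fin d =>
    adam_coord α β ε hα.2 hβ.2 hε t ht (m i) (v i) (hv i)
  have hip : ∀ s : ℝ, ⟪m, adamG α β ε d s m v⟫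
      = ∑ i, m i * ((m i / (1 - Real.exp (-(1 - α) * s))) /
          (Real.sqrt (v i / (1 - Real.exp (-(1 - β) * s))) + ε)) := by
    intro s
    simp [adamG, PiLp.inner_apply, RCLike.inner_apply]
    exact Finset.sum_congr rfl fun i _ => mul_comm _ _
  refine ⟨∑ i, D i, ?_, ?_⟩
  · simpa only [hip] using HasDerivAt.fun_sum (fun i _ => hD i)
  · rw [hip t, Finset.mul_sum]
    exact Finset.sum_le_sum fun i _ => hDle i
end

section
/- Fix t > 0, m ∈ ℝᵈ, a ∈ ℝᵈ, and v ∈ ℝᵈ with strictly positive entries. Then (1−α) ⟨∇_m ⟨m, g_t(m,v)⟩, a − m⟩ + (1−β) ⟨∇_v ⟨m, g_t(m,v)⟩, a² − v⟩ ≤ 2(1−α) ⟨a, g_t(m,v)⟩ − 2(1−α) (1 − (1−β)/(4(1−α))) ⟨m, g_t(m,v)⟩, where a² denotes the coordinatewise square and ∇_m, ∇_v denote the gradients of (m,v) ↦ ⟨m, g_t(m,v)⟩ in the m- and v-variables. (Pointwise inequality, equation (A.15) in the proof of Theorem 1, where a plays the role of the Wasserstein gradient ∇_W F[μ_t](x).)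 -/
open MeasureTheory Filter
open scoped RealInnerProductSpace

/-- Coordinatewise square of a vector. -/
noncomputable def vsq (d : ℕ) (w : EuclideanSpace ℝ (Fin d)) : EuclideanSpace ℝ (Fin d) :=
  WithLp.toLp 2 (fun i => (w i) ^ 2)

lemma hasGradientAt_sum_coord {d : ℕ} (φ : Fin d → ℝ → ℝ) (φ' : Fin d → ℝ)
    (x : EuclideanSpace ℝ (Fin d)) (h : ∀ i, HasDerivAt (φ i) (φ' i) (x i)) :
    HasGradientAt (fun y : EuclideanSpace ℝ (Fin d) => ∑ i, φ i (y i))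
      (WithLp.toLp 2 φ' : EuclideanSpace ℝ (Fin d)) x := by
  rw [hasGradientAt_iff_hasFDerivAt]
  have hF : HasFDerivAt (fun y : EuclideanSpace ℝ (Fin d) => ∑ i, φ i (y i))
      (∑ i, (φ' i) • (EuclideanSpace.proj i : EuclideanSpace ℝ (Fin d) →L[ℝ] ℝ)) x := by
    refine HasFDerivAt.fun_sum fun i _ => ?_
    have h2 := (h i).comp_hasFDerivAt x
      (EuclideanSpace.proj i : EuclideanSpace ℝ (Fin d) →L[ℝ] ℝ).hasFDerivAt
    exact h2
  refine hF.congr_fderiv ?_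
  ext y
  simp [InnerProductSpace.toDual_apply_apply, PiLp.toLp_apply, PiLp.inner_apply, RCLike.inner_apply, mul_comm]

set_option maxHeartbeats 1000000 in
/-- **Pointwise inequality (equation (A.15))** in the proof of Theorem 1. Fix `t > 0`, `m`,
`a`, and an entrywise strictly positive `v`. Then
`(1−α)⟨∇ₘ⟨m, g_t(m,v)⟩, a − m⟩ + (1−β)⟨∇ᵥ⟨m, g_t(m,v)⟩, a² − v⟩
  ≤ 2(1−α)⟨a, g_t(m,v)⟩ − 2(1−α)(1 − (1−β)/(4(1−α)))⟨m, g_t(m,v)⟩`,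
where `a²` is the coordinatewise square and `∇ₘ`, `∇ᵥ` are the gradients of
`(m,v) ↦ ⟨m, g_t(m,v)⟩` in the `m`- and `v`-variables (here `a` plays the role of
the Wasserstein gradient `∇_W F[μ_t](x)`). -/
theorem adamG_pointwise_inequality
    (d : ℕ) (α β ε η : ℝ)
    (hα : α ∈ Set.Ico (0 : ℝ) 1) (hβ : β ∈ Set.Ico (0 : ℝ) 1) (hε : 0 < ε) (hη : 0 < η)
    (t : ℝ) (ht : 0 < t)
    (m a v : EuclideanSpace ℝ (Fin d)) (hv : ∀ i, 0 < v i) :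
    (1 - α) * ⟪gradient (fun m' : EuclideanSpace ℝ (Fin d) =>
        ⟪m', adamG α β ε d t m' v⟫) m, a - m⟫
    + (1 - β) * ⟪gradient (fun v' : EuclideanSpace ℝ (Fin d) =>
        ⟪m, adamG α β ε d t m v'⟫) v, vsq d a - v⟫
    ≤ 2 * (1 - α) * ⟪a, adamG α β ε d t m v⟫
      - 2 * (1 - α) * (1 - (1 - β) / (4 * (1 - α))) * ⟪m, adamG α β ε d t m v⟫ := by
  obtain ⟨hα0, hα1⟩ := hα
  obtain ⟨hβ0, hβ1⟩ := hβ
  have hc1 : (0 : ℝ) < 1 - Real.exp (-(1 - α) * t) := by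
    have : Real.exp (-(1 - α) * t) < 1 := by
      rw [Real.exp_lt_one_iff]; nlinarith
    linarith
  have hc2 : (0 : ℝ) < 1 - Real.exp (-(1 - β) * t) := by
    have : Real.exp (-(1 - β) * t) < 1 := by
      rw [Real.exp_lt_one_iff]; nlinarith
    linarith
  set c1 : ℝ := 1 - Real.exp (-(1 - α) * t) with hc1def
  set c2 : ℝ := 1 - Real.exp (-(1 - β) * t) with hc2def
  have hSpos : ∀ i, 0 < Real.sqrt (v i / c2) :=
    fun i => Real.sqrt_pos.mpr (div_pos (hv i) hc2)
  have hSsq : ∀ i, Real.sqrt (v i / c2) ^ 2 = v i / c2 :=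
    fun i => Real.sq_sqrt (le_of_lt (div_pos (hv i) hc2))
  -- the m-gradient
  have hg1 : HasGradientAt (fun m' : EuclideanSpace ℝ (Fin d) =>
      ⟪m', adamG α β ε d t m' v⟫)
      (WithLp.toLp 2 (fun i => 2 * (m i) / c1 / (Real.sqrt (v i / c2) + ε)) : EuclideanSpace ℝ (Fin d)) m := by
    have heq : (fun m' : EuclideanSpace ℝ (Fin d) => ⟪m', adamG α β ε d t m' v⟫)
        = fun m' : EuclideanSpace ℝ (Fin d) =>
          ∑ i, (m' i) * (m' i) / c1 / (Real.sqrt (v i / c2) + ε) := by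
      funext m'
      simp only [adamG, PiLp.toLp_apply, PiLp.inner_apply, RCLike.inner_apply, conj_trivial, ← hc1def, ← hc2def]
      refine Finset.sum_congr rfl fun i _ => by ring
    rw [heq]
    refine hasGradientAt_sum_coord
      (fun i x => x * x / c1 / (Real.sqrt (v i / c2) + ε))
      (fun i => 2 * (m i) / c1 / (Real.sqrt (v i / c2) + ε)) m fun i => ?_
    have h1 := (((hasDerivAt_id (m i)).mul (hasDerivAt_id (m i))).div_const c1).div_const
      (Real.sqrt (v i / c2) + ε)
    refine h1.congr_deriv ?_
    simp only [id_eq]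
    ring
  -- the v-gradient
  have hg2 : HasGradientAt (fun v' : EuclideanSpace ℝ (Fin d) =>
      ⟪m, adamG α β ε d t m v'⟫)
      (WithLp.toLp 2 (fun i => -((m i) * (m i) / c1) / (2 * c2 * Real.sqrt (v i / c2)
        * (Real.sqrt (v i / c2) + ε) ^ 2)) : EuclideanSpace ℝ (Fin d)) v := by
    have heq : (fun v' : EuclideanSpace ℝ (Fin d) => ⟪m, adamG α β ε d t m v'⟫)
        = fun v' : EuclideanSpace ℝ (Fin d) =>
          ∑ i, (m i * (m i / c1)) / (Real.sqrt (v' i / c2) + ε) := by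
      funext v'
      simp only [adamG, PiLp.toLp_apply, PiLp.inner_apply, RCLike.inner_apply, conj_trivial, ← hc1def, ← hc2def]
      refine Finset.sum_congr rfl fun i _ => by ring
    rw [heq]
    refine hasGradientAt_sum_coord
      (fun i x => (m i * (m i / c1)) / (Real.sqrt (x / c2) + ε))
      (fun i => -((m i) * (m i) / c1) / (2 * c2 * Real.sqrt (v i / c2)
        * (Real.sqrt (v i / c2) + ε) ^ 2)) v fun i => ?_
    have hdivc : HasDerivAt (fun x : ℝ => x / c2) (1 / c2) (v i) := by
      simpa using (hasDerivAt_id (v i)).div_const c2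
    have hsq := (Real.hasDerivAt_sqrt (ne_of_gt (div_pos (hv i) hc2))).comp (v i) hdivc
    have hu : HasDerivAt (fun x : ℝ => Real.sqrt (x / c2) + ε)
        (1 / (2 * Real.sqrt (v i / c2)) * (1 / c2)) (v i) := hsq.add_const ε
    have hune : Real.sqrt (v i / c2) + ε ≠ 0 := by positivity
    have hd := (hasDerivAt_const (v i) (m i * (m i / c1))).div hu hune
    refine hd.congr_deriv ?_
    have hS := hSpos i
    field_simp
    ring
  rw [hg1.gradient, hg2.gradient]
  simp only [PiLp.inner_apply, RCLike.inner_apply, conj_trivial, PiLp.sub_apply, vsq, adamG, PiLp.toLp_apply,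
    ← hc1def, ← hc2def]
  rw [Finset.mul_sum, Finset.mul_sum, Finset.mul_sum, Finset.mul_sum,
    ← Finset.sum_add_distrib, ← Finset.sum_sub_distrib]
  refine Finset.sum_le_sum fun i _ => ?_
  have hS := hSpos i
  have hvi : v i = c2 * Real.sqrt (v i / c2) ^ 2 := by
    rw [hSsq i]; field_simp
  set S : ℝ := Real.sqrt (v i / c2) with hSdef
  have hSε : (0 : ℝ) < S + ε := by linarith
  have hα1' : (0 : ℝ) < 1 - α := by linarith
  have key : (2 * (1 - α) * (a i * (m i / c1 / (S + ε)))
        - 2 * (1 - α) * (1 - (1 - β) / (4 * (1 - α))) * (m i * (m i / c1 / (S + ε))))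
      - ((1 - α) * (2 * m i / c1 / (S + ε) * (a i - m i))
        + (1 - β) * (-(m i * m i / c1) / (2 * c2 * S * (S + ε) ^ 2) * (a i ^ 2 - v i)))
      = (1 - β) * (m i) ^ 2 * (c2 * S * ε + (a i) ^ 2) / (2 * c1 * c2 * S * (S + ε) ^ 2) := by
    rw [hvi]
    field_simp
    ring
  have hpos : (0 : ℝ) ≤ (1 - β) * (m i) ^ 2 * (c2 * S * ε + (a i) ^ 2)
      / (2 * c1 * c2 * S * (S + ε) ^ 2) := by
    apply div_nonneg
    · apply mul_nonneg (mul_nonneg (by linarith) (sq_nonneg _))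
      nlinarith [sq_nonneg (a i), mul_pos (mul_pos hc2 hS) hε]
    · positivity
  linarith [key, hpos]
end

section
/- Let f : ℝᵈ → ℝ be continuously differentiable and bounded below, let α, β ∈ [0,1) satisfy 4α − β < 3, and let (x, m, v) : [0,∞) → ℝᵈ × ℝᵈ × ℝᵈ be a solution of the Adam ODE system with initial condition (x₀, 0, 0), differentiable on (0,∞), such that sup_{t ≥ 0} ‖∇f(x(t))‖ < ∞ and every entry of v(t) is strictly positive for all t > 0. Then lim_{t→∞} m(t) = 0, and consequently lim_{t→∞} ẋ(t) = 0. (Vanishing of the first-moment estimate, the Dirac-measure instance of the step lim_{t→∞} ∫ ‖m‖² dρ_t = 0 in the proof of Theorem 1.) -/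
open MeasureTheory Filter
open scoped RealInnerProductSpace

/-- Exponential-moving-average bound: if `u' = γ(p - u)`, `u 0 = 0`, `‖p‖ ≤ C`, then `‖u t‖ ≤ C`. -/
lemma ema_norm_le {E : Type*} [NormedAddCommGroup E] [NormedSpace ℝ E]
    (u p : ℝ → E) (γ C : ℝ) (hγ : 0 < γ)
    (hu0 : u 0 = 0) (hcont : ContinuousOn u (Set.Ici 0))
    (hderiv : ∀ t > (0:ℝ), HasDerivAt u (γ • (p t - u t)) t)
    (hp : ∀ t ≥ (0:ℝ), ‖p t‖ ≤ C) : ∀ t ≥ (0:ℝ), ‖u t‖ ≤ C := by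
  have hC : 0 ≤ C := le_trans (norm_nonneg _) (hp 0 le_rfl)
  intro t ht
  rcases eq_or_lt_of_le ht with h | ht
  · simp [← h, hu0, hC]
  -- work with w s = exp (γ s) • u s
  set w : ℝ → E := fun s => Real.exp (γ * s) • u s with hw
  have hwd : ∀ s > (0:ℝ), HasDerivAt w ((γ * Real.exp (γ * s)) • p s) s := by
    intro s hs
    have h1 : HasDerivAt (fun s => Real.exp (γ * s)) (γ * Real.exp (γ * s)) s := by
      simpa [mul_comm, Function.comp_def] using (Real.hasDerivAt_exp (γ * s)).comp s
        ((hasDerivAt_id s).const_mul γ)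
    have := h1.smul (hderiv s hs)
    exact this.congr_deriv (by module)
  -- on [a, t] for 0 < a ≤ t, fencing
  have key : ∀ a, 0 < a → a ≤ t →
      ‖w t‖ ≤ C * (Real.exp (γ * t) - Real.exp (γ * a)) + ‖w a‖ := by
    intro a ha hat
    have := image_norm_le_of_norm_deriv_right_le_deriv_boundary
      (f := w) (f' := fun s => (γ * Real.exp (γ * s)) • p s) (a := a) (b := t)
      (B := fun s => C * (Real.exp (γ * s) - Real.exp (γ * a)) + ‖w a‖)
      (B' := fun s => C * (γ * Real.exp (γ * s)))
      (fun s hs => ((hwd s (lt_of_lt_of_le ha hs.1)).continuousAt).continuousWithinAt)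
      (fun s hs => ((hwd s (lt_of_lt_of_le ha hs.1)).hasDerivWithinAt))
      (by simp)
      (fun s => by
        have h1 : HasDerivAt (fun s => Real.exp (γ * s)) (γ * Real.exp (γ * s)) s := by
          simpa [mul_comm, Function.comp_def] using (Real.hasDerivAt_exp (γ * s)).comp s
            ((hasDerivAt_id s).const_mul γ)
        exact ((h1.sub_const _).const_mul C).add_const _)
      (fun s hs => by
        have hsp : (0:ℝ) < s := lt_of_lt_of_le ha hs.1
        have := hp s hsp.le
        calc ‖(γ * Real.exp (γ * s)) • p s‖ = γ * Real.exp (γ * s) * ‖p s‖ := by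
              rw [norm_smul]; simp [abs_of_pos, Real.exp_pos, hγ,
                abs_of_nonneg (mul_nonneg hγ.le (Real.exp_pos _).le)]
          _ ≤ γ * Real.exp (γ * s) * C := by
              exact mul_le_mul_of_nonneg_left this (mul_nonneg hγ.le (Real.exp_pos _).le)
          _ = C * (γ * Real.exp (γ * s)) := by ring)
    exact this (Set.right_mem_Icc.2 hat)
  -- limit a → 0+
  have hlim : Tendsto (fun a => C * (Real.exp (γ * t) - Real.exp (γ * a)) + ‖w a‖)
      (nhdsWithin 0 (Set.Ioi 0)) (nhds (C * (Real.exp (γ * t) - 1) + 0)) := by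
    have hu : Tendsto u (nhdsWithin 0 (Set.Ioi 0)) (nhds 0) := by
      have := (hcont 0 (Set.mem_Ici.2 le_rfl)).mono (Set.Ioi_subset_Ici le_rfl)
      simpa [hu0] using this.tendsto
    have h1 : Tendsto (fun a : ℝ => Real.exp (γ * a)) (nhdsWithin 0 (Set.Ioi 0)) (nhds 1) := by
      have : Continuous fun a : ℝ => Real.exp (γ * a) := by continuity
      simpa using (this.tendsto 0).mono_left nhdsWithin_le_nhds
    have hwn : Tendsto (fun a => ‖w a‖) (nhdsWithin 0 (Set.Ioi 0)) (nhds 0) := by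
      have : Tendsto w (nhdsWithin 0 (Set.Ioi 0)) (nhds ((1:ℝ) • (0:E))) :=
        h1.smul hu
      simpa using this.norm
    exact ((tendsto_const_nhds.mul (tendsto_const_nhds.sub h1)).add hwn)
  have hineq : ‖w t‖ ≤ C * (Real.exp (γ * t) - 1) + 0 := by
    refine ge_of_tendsto hlim ?_
    filter_upwards [Ioc_mem_nhdsGT_of_mem (Set.left_mem_Ico.2 ht)] with a ha
    exact key a ha.1 ha.2
  have hwt : ‖w t‖ = Real.exp (γ * t) * ‖u t‖ := by
    rw [hw]; simp [norm_smul, abs_of_pos (Real.exp_pos _)]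
  rw [hwt] at hineq
  have hexp : (0:ℝ) < Real.exp (γ * t) := Real.exp_pos _
  nlinarith [Real.exp_pos (γ * t), norm_nonneg (u t), hC]

/-- Barbalat-type lemma: a nonnegative Lipschitz function with bounded primitive tends to 0. -/
lemma barbalat (u : ℝ → ℝ) (T₀ L M : ℝ) (hL : 0 < L)
    (hu0 : ∀ t ≥ T₀, 0 ≤ u t)
    (hcont : ContinuousOn u (Set.Ici T₀))
    (hlip : ∀ a b, T₀ ≤ a → a ≤ b → |u b - u a| ≤ L * (b - a))
    (hbound : ∀ t ≥ T₀, (∫ s in T₀..t, u s) ≤ M) :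
    Tendsto u atTop (nhds 0) := by
  set ψ : ℝ → ℝ := fun t => ∫ s in T₀..t, u s with hψ
  have hint : ∀ a b, T₀ ≤ a → a ≤ b → IntervalIntegrable u volume a b := by
    intro a b ha hab
    apply ContinuousOn.intervalIntegrable
    apply hcont.mono
    rw [Set.uIcc_of_le hab]
    exact fun s hs => le_trans ha hs.1
  have hψadd : ∀ a b, T₀ ≤ a → a ≤ b → ψ b = ψ a + ∫ s in a..b, u s := by
    intro a b ha hab
    rw [hψ]
    exact (intervalIntegral.integral_add_adjacent_intervals
      (hint T₀ a le_rfl ha) (hint a b ha hab)).symm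
  have hmono : ∀ a b, T₀ ≤ a → a ≤ b → ψ a ≤ ψ b := by
    intro a b ha hab
    rw [hψadd a b ha hab]
    have : 0 ≤ ∫ s in a..b, u s :=
      intervalIntegral.integral_nonneg hab (fun s hs => hu0 s (le_trans ha hs.1))
    linarith
  have hne : (ψ '' Set.Ici T₀).Nonempty := ⟨ψ T₀, Set.mem_image_of_mem _ (Set.mem_Ici.2 le_rfl)⟩
  have hbdd : BddAbove (ψ '' Set.Ici T₀) := by
    refine ⟨M, ?_⟩
    rintro y ⟨t, ht, rfl⟩
    exact hbound t ht
  set S := sSup (ψ '' Set.Ici T₀) with hS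
  rw [Metric.tendsto_atTop]
  intro ε hε
  set δ : ℝ := ε / (2 * L) with hδ
  have hδpos : 0 < δ := div_pos hε (by linarith)
  set ρ : ℝ := (ε / 2) * δ with hρ
  have hρpos : 0 < ρ := mul_pos (by linarith) hδpos
  obtain ⟨y, ⟨T₁, hT₁, rfl⟩, hy⟩ := exists_lt_of_lt_csSup hne (show S - ρ < S by linarith)
  refine ⟨T₁, fun t ht => ?_⟩
  have hT₀t : T₀ ≤ t := le_trans hT₁ ht
  by_contra hcon
  push_neg at hcon
  have hut : ε ≤ u t := by
    have := hu0 t hT₀t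
    rw [Real.dist_eq] at hcon
    rw [abs_of_nonneg (by linarith : (0:ℝ) ≤ u t - 0)] at hcon
    linarith
  -- on [t, t+δ], u ≥ ε/2
  have hlow : ∀ s ∈ Set.Icc t (t + δ), ε / 2 ≤ u s := by
    intro s hs
    have h1 := hlip t s hT₀t hs.1
    have h2 : |u s - u t| ≤ L * δ := le_trans h1 (by
      have : s - t ≤ δ := by linarith [hs.2]
      exact mul_le_mul_of_nonneg_left this hL.le)
    have hLδ : L * δ = ε / 2 := by
      rw [hδ]; field_simp
    rw [hLδ] at h2
    have := abs_le.1 h2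
    linarith [this.1]
  have hstep : ρ ≤ ψ (t + δ) - ψ t := by
    rw [hψadd t (t + δ) hT₀t (by linarith)]
    have : (ε / 2) * δ ≤ ∫ s in t..(t + δ), u s := by
      have h1 : ∫ s in t..(t + δ), (ε / 2 : ℝ) ≤ ∫ s in t..(t + δ), u s := by
        apply intervalIntegral.integral_mono_on (by linarith)
          intervalIntegrable_const (hint t (t + δ) hT₀t (by linarith))
        exact hlow
      rw [intervalIntegral.integral_const] at h1
      calc (ε / 2) * δ = (t + δ - t) • (ε / 2 : ℝ) := by simp [smul_eq_mul]; ring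
        _ ≤ _ := h1
    linarith [this]
  have hψt : S - ρ < ψ t := lt_of_lt_of_le hy (hmono T₁ t hT₁ ht)
  have hle : ψ (t + δ) ≤ S :=
    le_csSup hbdd (Set.mem_image_of_mem _ (Set.mem_Ici.2 (by linarith)))
  linarith

/-- Per-coordinate Lyapunov derivative bound for the Adam ODE. -/
lemma adam_coord_key (α β ε η mi gi vi a b a' b' : ℝ)
    (hα : α < 1) (hβ : β < 1) (hε : 0 < ε) (hη : 0 < η)
    (ha : 0 < a) (hb : 0 < b) (hvi : 0 < vi)
    (ha' : 0 ≤ a') (hb' : b' = (1 - β) * (1 - b)) :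
    -η * (gi * (mi / a / (Real.sqrt (vi / b) + ε))) +
      η / (2 * (1 - α)) *
        ((2 * mi ^ 1 * ((1 - α) * (gi - mi)) * (a * (Real.sqrt (vi / b) + ε)) -
            mi ^ 2 * (a' * (Real.sqrt (vi / b) + ε) +
              a * ((((1 - β) * (gi ^ 2 - vi)) * b - vi * b') / b ^ 2 / (2 * Real.sqrt (vi / b))))) /
          (a * (Real.sqrt (vi / b) + ε)) ^ 2)
    ≤ -(η * (1 - (1 - β) / (4 * (1 - α) * b))) * (mi ^ 2 / (a * (Real.sqrt (vi / b) + ε))) := by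
  have hα1 : 0 < 1 - α := by linarith
  have hβ1 : 0 < 1 - β := by linarith
  set s := Real.sqrt (vi / b) with hsdef
  have hs : 0 < s := Real.sqrt_pos.2 (div_pos hvi hb)
  have hss : s ^ 2 = vi / b := Real.sq_sqrt (div_pos hvi hb).le
  set q := a * (s + ε) with hqdef
  have hq : 0 < q := mul_pos ha (by linarith)
  set R' := (((1 - β) * (gi ^ 2 - vi)) * b - vi * b') / b ^ 2 with hR'def
  have hR : R' = (1 - β) * (gi ^ 2 * b - vi) / b ^ 2 := by
    rw [hR'def, hb']; field_simp; ring
  have hRlow : -((1 - β) * vi / b ^ 2) ≤ R' := by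
    rw [hR, show -((1 - β) * vi / b ^ 2) = (-((1 - β) * vi)) / b ^ 2 by ring]
    have hb2 : (0:ℝ) < b ^ 2 := by positivity
    exact div_le_div_of_nonneg_right
      (by nlinarith [mul_nonneg (mul_nonneg hβ1.le (sq_nonneg gi)) hb.le]) hb2.le
  set Q' := a' * (s + ε) + a * (R' / (2 * s)) with hQ'def
  have hQlow : -((1 - β) / (2 * b)) * q ≤ Q' := by
    have h1 : a * (R' / (2 * s)) ≥ a * ((-((1 - β) * vi / b ^ 2)) / (2 * s)) := by
      apply mul_le_mul_of_nonneg_left _ ha.le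
      exact div_le_div_of_nonneg_right hRlow (by linarith)
      
    have hvib : vi = s ^ 2 * b := by
      rw [hss]; field_simp
    have h2 : a * ((-((1 - β) * vi / b ^ 2)) / (2 * s)) = -(a * (1 - β) * s / (2 * b)) := by
      rw [hvib]; field_simp
    have h3 : -(a * (1 - β) * s / (2 * b)) ≥ -((1 - β) / (2 * b)) * q := by
      rw [hqdef, ge_iff_le, neg_mul, neg_le_neg_iff]
      have hd : (1 - β) / (2 * b) * (a * (s + ε)) - a * (1 - β) * s / (2 * b)
          = a * (1 - β) * ε / (2 * b) := by field_simp; ring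
      have hpos : 0 ≤ a * (1 - β) * ε / (2 * b) := by positivity
      linarith [hd, hpos]
    have h4 : 0 ≤ a' * (s + ε) := mul_nonneg ha' (by linarith)
    rw [hQ'def]
    linarith [h1, h3]
  -- rewrite the LHS as -η mi²/q - c₀ mi² Q'/q²
  have hiden : -η * (gi * (mi / a / (s + ε))) +
      η / (2 * (1 - α)) *
        ((2 * mi ^ 1 * ((1 - α) * (gi - mi)) * q - mi ^ 2 * Q') / q ^ 2)
      = -η * (mi ^ 2 / q) + η / (2 * (1 - α)) * (mi ^ 2 / q ^ 2) * (-Q') := by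
    rw [hqdef]
    field_simp
    ring
  have hmono : η / (2 * (1 - α)) * (mi ^ 2 / q ^ 2) * (-Q') ≤
      η / (2 * (1 - α)) * (mi ^ 2 / q ^ 2) * ((1 - β) / (2 * b) * q) := by
    apply mul_le_mul_of_nonneg_left _ (by positivity)
    linarith [hQlow]
  have hrhs : -η * (mi ^ 2 / q) + η / (2 * (1 - α)) * (mi ^ 2 / q ^ 2) * ((1 - β) / (2 * b) * q)
      = -(η * (1 - (1 - β) / (4 * (1 - α) * b))) * (mi ^ 2 / q) := by
    field_simp
    ring
  calc -η * (gi * (mi / a / (s + ε))) +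
      η / (2 * (1 - α)) *
        ((2 * mi ^ 1 * ((1 - α) * (gi - mi)) * (a * (s + ε)) -
            mi ^ 2 * (a' * (s + ε) +
              a * ((((1 - β) * (gi ^ 2 - vi)) * b - vi * b') / b ^ 2 / (2 * s)))) /
          (a * (s + ε)) ^ 2)
      = -η * (mi ^ 2 / q) + η / (2 * (1 - α)) * (mi ^ 2 / q ^ 2) * (-Q') := by
        rw [← hiden, hqdef, hQ'def, hR'def]
    _ ≤ -η * (mi ^ 2 / q) + η / (2 * (1 - α)) * (mi ^ 2 / q ^ 2) * ((1 - β) / (2 * b) * q) := by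
        linarith [hmono]
    _ = -(η * (1 - (1 - β) / (4 * (1 - α) * b))) * (mi ^ 2 / q) := hrhs

/-- The bias-correction factor `1 - e^{-(1-γ)t}`. -/
noncomputable def expA (γ t : ℝ) : ℝ := 1 - Real.exp (-(1 - γ) * t)

lemma hasDerivAt_expA (γ t : ℝ) :
    HasDerivAt (expA γ) ((1 - γ) * Real.exp (-(1 - γ) * t)) t := by
  have h : HasDerivAt (fun t => Real.exp (-(1 - γ) * t))
      (Real.exp (-(1 - γ) * t) * (-(1 - γ))) t := by
    have := (Real.hasDerivAt_exp (-(1 - γ) * t)).comp t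
      (((hasDerivAt_id t).const_mul (-(1 - γ))) :
        HasDerivAt (fun s => -(1 - γ) * id s) (-(1 - γ) * 1) t)
    simpa [Function.comp_def] using this
  have := (hasDerivAt_const t (1:ℝ)).sub h
  exact this.congr_deriv (by ring)

lemma expA_pos {γ t : ℝ} (hγ : γ < 1) (ht : 0 < t) : 0 < expA γ t := by
  have : Real.exp (-(1 - γ) * t) < 1 := by
    rw [Real.exp_lt_one_iff]
    nlinarith
  simp only [expA]; linarith

lemma expA_le_one (γ t : ℝ) : expA γ t ≤ 1 := by
  have := Real.exp_pos (-(1 - γ) * t)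
  simp only [expA]; linarith

lemma expA_mono {γ : ℝ} (hγ : γ < 1) : Monotone (expA γ) := by
  intro s t hst
  simp only [expA, sub_le_sub_iff_left]
  apply Real.exp_le_exp.2
  nlinarith

lemma expA_tendsto {γ : ℝ} (hγ : γ < 1) : Tendsto (expA γ) atTop (nhds 1) := by
  have h1 : Tendsto (fun t : ℝ => -(1 - γ) * t) atTop atBot :=
    tendsto_id.const_mul_atTop_of_neg (by linarith)
  have h2 : Tendsto (fun t : ℝ => Real.exp (-(1 - γ) * t)) atTop (nhds 0) :=
    Real.tendsto_exp_atBot.comp h1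
  have h3 := (tendsto_const_nhds (α := ℝ) (x := (1:ℝ)) (f := atTop)).sub h2
  simp only [sub_zero] at h3
  exact h3

lemma coord_abs_le_norm {d : ℕ} (z : EuclideanSpace ℝ (Fin d)) (i : Fin d) : |z i| ≤ ‖z‖ := by
  rw [EuclideanSpace.norm_eq]
  rw [show |z i| = Real.sqrt (|z i| ^ 2) by rw [Real.sqrt_sq (abs_nonneg _)]]
  apply Real.sqrt_le_sqrt
  rw [show |z i| ^ 2 = ‖z i‖ ^ 2 by rw [Real.norm_eq_abs]]
  exact Finset.single_le_sum (f := fun j => ‖z j‖ ^ 2) (fun j _ => by positivity)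
    (Finset.mem_univ i)

lemma euclid_norm_le_coord {d : ℕ} (z w : EuclideanSpace ℝ (Fin d)) (C : ℝ) (hC : 0 ≤ C)
    (h : ∀ i, |z i| ≤ C * |w i|) : ‖z‖ ≤ C * ‖w‖ := by
  rw [EuclideanSpace.norm_eq, EuclideanSpace.norm_eq]
  rw [show C * Real.sqrt (∑ i, ‖w i‖ ^ 2) = Real.sqrt (C ^ 2 * ∑ i, ‖w i‖ ^ 2) by
    rw [Real.sqrt_mul (by positivity), Real.sqrt_sq hC]]
  apply Real.sqrt_le_sqrt
  rw [Finset.mul_sum]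
  apply Finset.sum_le_sum
  intro i _
  have := h i
  simp only [Real.norm_eq_abs]
  calc |z i| ^ 2 ≤ (C * |w i|) ^ 2 := by
        apply sq_le_sq' _ this; nlinarith [abs_nonneg (z i)]
    _ = C ^ 2 * |w i| ^ 2 := by ring

lemma adamG_apply (α β ε : ℝ) (d : ℕ) (t : ℝ) (mm vv : EuclideanSpace ℝ (Fin d)) (i : Fin d) :
    adamG α β ε d t mm vv i = mm i / expA α t / (Real.sqrt (vv i / expA β t) + ε) := rfl

set_option maxHeartbeats 2000000 in
/-- **Vanishing of the first-moment estimate** (the Dirac-measure instance of the step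
`lim_{t→∞} ∫‖m‖² dρ_t = 0` in the proof of Theorem 1). Let `f` be `C¹` and bounded below,
`4α − β < 3`, and let `(x, m, v)` be a solution of the Adam ODE system on `[0,∞)` with
initial condition `(x₀, 0, 0)`, differentiable on `(0,∞)`, with `‖∇f(x(t))‖` uniformly
bounded and `v(t)` entrywise strictly positive for `t > 0`. Then `m(t) → 0` and hence
`ẋ(t) = −η g_t(m(t), v(t)) → 0` as `t → ∞`. -/
theorem adam_first_moment_vanishes
    (d : ℕ) (α β ε η : ℝ)
    (hα : α ∈ Set.Ico (0 : ℝ) 1) (hβ : β ∈ Set.Ico (0 : ℝ) 1) (hε : 0 < ε) (hη : 0 < η)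
    (hcond : 4 * α - β < 3)
    (f : EuclideanSpace ℝ (Fin d) → ℝ) (hf : ContDiff ℝ 1 f)
    (Flb : ℝ) (hFlb : ∀ y, Flb ≤ f y)
    (x m v : ℝ → EuclideanSpace ℝ (Fin d)) (x₀ : EuclideanSpace ℝ (Fin d))
    (hx0 : x 0 = x₀) (hm0 : m 0 = 0) (hv0 : v 0 = 0)
    (hcx : ContinuousOn x (Set.Ici 0)) (hcm : ContinuousOn m (Set.Ici 0))
    (hcv : ContinuousOn v (Set.Ici 0))
    (hvpos : ∀ t > (0 : ℝ), ∀ i, 0 < v t i)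
    (hm : ∀ t > (0 : ℝ), HasDerivAt m ((1 - α) • (gradient f (x t) - m t)) t)
    (hv : ∀ t > (0 : ℝ), HasDerivAt v ((1 - β) • (vsq d (gradient f (x t)) - v t)) t)
    (hx : ∀ t > (0 : ℝ), HasDerivAt x ((-η) • adamG α β ε d t (m t) (v t)) t)
    (G : ℝ) (hG : ∀ t ≥ (0 : ℝ), ‖gradient f (x t)‖ ≤ G) :
    Tendsto m atTop (nhds 0) ∧
    Tendsto (fun t => (-η) • adamG α β ε d t (m t) (v t)) atTop
      (nhds (0 : EuclideanSpace ℝ (Fin d))) := by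
  obtain ⟨hα0, hα1⟩ := hα
  obtain ⟨hβ0, hβ1⟩ := hβ
  have hα1' : (0:ℝ) < 1 - α := by linarith
  have hβ1' : (0:ℝ) < 1 - β := by linarith
  have hG0 : (0:ℝ) ≤ G := le_trans (norm_nonneg _) (hG 0 le_rfl)
  set p : ℝ → EuclideanSpace ℝ (Fin d) := fun t => gradient f (x t) with hpdef
  have hmb : ∀ t ≥ (0:ℝ), ‖m t‖ ≤ G := ema_norm_le m p (1 - α) G hα1' hm0 hcm hm hG
  -- coordinate derivatives
  have hmid : ∀ t > (0:ℝ), ∀ i, HasDerivAt (fun s => m s i) ((1 - α) * (p t i - m t i)) t := by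
    intro t ht i
    have h := (EuclideanSpace.proj (𝕜 := ℝ) i).hasFDerivAt.comp_hasDerivAt t (hm t ht)
    simpa [PiLp.proj_apply, PiLp.smul_apply, PiLp.sub_apply, smul_eq_mul, Function.comp_def] using h
  have hvid : ∀ t > (0:ℝ), ∀ i, HasDerivAt (fun s => v s i) ((1 - β) * ((p t i) ^ 2 - v t i)) t := by
    intro t ht i
    have h := (EuclideanSpace.proj (𝕜 := ℝ) i).hasFDerivAt.comp_hasDerivAt t (hv t ht)
    simpa [PiLp.proj_apply, PiLp.smul_apply, PiLp.sub_apply, smul_eq_mul, vsq, Function.comp_def] using h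
  have hcmi : ∀ i, ContinuousOn (fun s => m s i) (Set.Ici 0) := fun i =>
    (EuclideanSpace.proj (𝕜 := ℝ) i).continuous.comp_continuousOn hcm
  have hcvi : ∀ i, ContinuousOn (fun s => v s i) (Set.Ici 0) := fun i =>
    (EuclideanSpace.proj (𝕜 := ℝ) i).continuous.comp_continuousOn hcv
  have hmib : ∀ t ≥ (0:ℝ), ∀ i, |m t i| ≤ G := fun t ht i =>
    le_trans (coord_abs_le_norm _ i) (hmb t ht)
  have hpib : ∀ t ≥ (0:ℝ), ∀ i, |p t i| ≤ G := fun t ht i =>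
    le_trans (coord_abs_le_norm _ i) (hG t ht)
  have hvb : ∀ t ≥ (0:ℝ), ∀ i, v t i ≤ G ^ 2 := by
    intro t ht i
    have key := ema_norm_le (E := ℝ) (fun s => v s i) (fun s => (p s i) ^ 2) (1 - β) (G ^ 2)
      hβ1' (by simp [hv0]) (hcvi i)
      (fun s hs => by simpa [smul_eq_mul] using hvid s hs i)
      (fun s hs => by
        rw [Real.norm_eq_abs, abs_of_nonneg (sq_nonneg _)]
        calc (p s i) ^ 2 = |p s i| ^ 2 := (sq_abs _).symm
          _ ≤ G ^ 2 := by have := hpib s hs i; nlinarith [abs_nonneg (p s i)])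
    have := key t ht
    rw [Real.norm_eq_abs] at this
    exact le_trans (le_abs_self _) this
  -- choice of T₀
  have hκ : (1 - β) / (4 * (1 - α)) < 1 := by
    rw [div_lt_one (by linarith)]; linarith
  obtain ⟨T₀, hT₀pos, hT₀B⟩ : ∃ T₀ > (0:ℝ), (1 - β) / (4 * (1 - α)) < expA β T₀ := by
    have := (expA_tendsto hβ1).eventually (eventually_gt_nhds hκ)
    rcases (this.and (eventually_gt_atTop 0)).exists with ⟨T₀, h1, h2⟩
    exact ⟨T₀, h2, h1⟩
  have hBT₀ : 0 < expA β T₀ := expA_pos hβ1 hT₀pos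
  have hAT₀ : 0 < expA α T₀ := expA_pos hα1 hT₀pos
  set θ : ℝ := 1 - (1 - β) / (4 * (1 - α) * expA β T₀) with hθdef
  have hθpos : 0 < θ := by
    rw [hθdef, sub_pos, div_lt_one (by positivity)]
    rw [div_lt_iff₀ (by linarith : (0:ℝ) < 4 * (1 - α))] at hT₀B
    linarith [hT₀B]
  set Q : ℝ := G / Real.sqrt (expA β T₀) + ε with hQdef
  have hQpos : 0 < Q := by
    have : 0 ≤ G / Real.sqrt (expA β T₀) := by positivity
    rw [hQdef]; linarith
  set c : ℝ := η * θ / Q with hcdef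
  have hcpos : 0 < c := by rw [hcdef]; positivity
  set u : ℝ → ℝ := fun t => ∑ i, (m t i) ^ 2 with hudef
  set w : ℝ → ℝ := fun t => ∑ i, (m t i) ^ 2 /
    (expA α t * (Real.sqrt (v t i / expA β t) + ε)) with hwdef
  set E : ℝ → ℝ := fun t => f (x t) + η / (2 * (1 - α)) * w t with hEdef
  have hEderiv : ∀ t > (0:ℝ), ∃ et, HasDerivAt E et t ∧ (T₀ ≤ t → et ≤ -c * u t) := by
    intro t ht
    have hAt : 0 < expA α t := expA_pos hα1 ht
    have hBt : 0 < expA β t := expA_pos hβ1 ht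
    have hqpos : ∀ i, 0 < expA α t * (Real.sqrt (v t i / expA β t) + ε) := fun i =>
      mul_pos hAt (by positivity)
    have hwi : ∀ i : Fin d, HasDerivAt
        (fun s => (m s i) ^ 2 / (expA α s * (Real.sqrt (v s i / expA β s) + ε)))
        ((2 * m t i ^ 1 * ((1 - α) * (p t i - m t i)) *
            (expA α t * (Real.sqrt (v t i / expA β t) + ε)) -
          m t i ^ 2 *
            ((1 - α) * Real.exp (-(1 - α) * t) * (Real.sqrt (v t i / expA β t) + ε) +
              expA α t *
                (((1 - β) * ((p t i) ^ 2 - v t i) * expA β t -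
                    v t i * ((1 - β) * Real.exp (-(1 - β) * t))) / expA β t ^ 2 /
                  (2 * Real.sqrt (v t i / expA β t))))) /
          (expA α t * (Real.sqrt (v t i / expA β t) + ε)) ^ 2) t := by
      intro i
      have hri : HasDerivAt (fun s => v s i / expA β s)
          (((1 - β) * ((p t i) ^ 2 - v t i) * expA β t -
            v t i * ((1 - β) * Real.exp (-(1 - β) * t))) / expA β t ^ 2) t :=
        (hvid t ht i).div (hasDerivAt_expA β t) hBt.ne'
      have hrpos : 0 < v t i / expA β t := div_pos (hvpos t ht i) hBt
      have hsi := hri.sqrt hrpos.ne'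
      have hqi := (hasDerivAt_expA α t).mul (hsi.add_const ε)
      have h2 := ((hmid t ht i).pow 2).div hqi (hqpos i).ne'
      exact h2.congr_deriv (by norm_num)
    have hwsum := HasDerivAt.fun_sum (u := Finset.univ) (fun i _ => hwi i)
    have hdfx : DifferentiableAt ℝ f (x t) := (hf.differentiable (by norm_num)).differentiableAt
    have hgrad : HasGradientAt f (p t) (x t) := hdfx.hasGradientAt
    have hfx := hgrad.hasFDerivAt.comp_hasDerivAt t (hx t ht)
    refine ⟨_, hfx.add (hwsum.const_mul (η / (2 * (1 - α)))), ?_⟩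
    intro hTt
    have hBT₀t : expA β T₀ ≤ expA β t := expA_mono hβ1 hTt
    have hT0t : (0:ℝ) ≤ t := ht.le
    rw [InnerProductSpace.toDual_apply_apply, PiLp.inner_apply]
    simp only [RCLike.inner_apply, conj_trivial, PiLp.smul_apply, smul_eq_mul, adamG_apply]
    have hut : -c * u t = ∑ i : Fin d, -c * (m t i) ^ 2 := by
      rw [show u t = ∑ i, (m t i) ^ 2 from rfl, Finset.mul_sum]
    rw [hut, Finset.mul_sum, ← Finset.sum_add_distrib]
    apply Finset.sum_le_sum
    intro i _
    have key := adam_coord_key α β ε η (m t i) (p t i) (v t i) (expA α t) (expA β t)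
      ((1 - α) * Real.exp (-(1 - α) * t)) ((1 - β) * Real.exp (-(1 - β) * t))
      hα1 hβ1 hε hη hAt hBt (hvpos t ht i) (by positivity) (by simp [expA])
    have e1 : -η * (m t i / expA α t / (Real.sqrt (v t i / expA β t) + ε)) * p t i
        = -η * (p t i * (m t i / expA α t / (Real.sqrt (v t i / expA β t) + ε))) := by ring
    rw [e1]
    refine le_trans key ?_
    -- step 4 : compare with -c * (m t i)^2
    have hs0 : (0:ℝ) ≤ Real.sqrt (v t i / expA β t) := Real.sqrt_nonneg _
    have hsle : Real.sqrt (v t i / expA β t) ≤ G / Real.sqrt (expA β T₀) := by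
      have h1 : v t i / expA β t ≤ G ^ 2 / expA β t :=
        div_le_div_of_nonneg_right (hvb t hT0t i) hBt.le
      have h2 : G ^ 2 / expA β t ≤ G ^ 2 / expA β T₀ :=
        div_le_div_of_nonneg_left (sq_nonneg G) hBT₀ hBT₀t
      calc Real.sqrt (v t i / expA β t) ≤ Real.sqrt (G ^ 2 / expA β T₀) :=
            Real.sqrt_le_sqrt (h1.trans h2)
        _ = G / Real.sqrt (expA β T₀) := by
            rw [Real.sqrt_div (sq_nonneg G), Real.sqrt_sq hG0]
    have hqle : expA α t * (Real.sqrt (v t i / expA β t) + ε) ≤ Q := by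
      calc expA α t * (Real.sqrt (v t i / expA β t) + ε)
          ≤ 1 * (Real.sqrt (v t i / expA β t) + ε) :=
            mul_le_mul_of_nonneg_right (expA_le_one α t) (by positivity)
        _ = Real.sqrt (v t i / expA β t) + ε := one_mul _
        _ ≤ Q := by rw [hQdef]; linarith [hsle]
    have hθle : θ ≤ 1 - (1 - β) / (4 * (1 - α) * expA β t) := by
      rw [hθdef]
      have h3 : (1 - β) / (4 * (1 - α) * expA β t) ≤ (1 - β) / (4 * (1 - α) * expA β T₀) :=
        div_le_div_of_nonneg_left hβ1'.le (by positivity) (by nlinarith [hBT₀t])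
      linarith
    have h1 : c * (m t i) ^ 2 ≤ (η * (1 - (1 - β) / (4 * (1 - α) * expA β t))) *
        ((m t i) ^ 2 / (expA α t * (Real.sqrt (v t i / expA β t) + ε))) := by
      have hcm2 : c * (m t i) ^ 2 = (η * θ) * ((m t i) ^ 2 / Q) := by
        rw [hcdef]; field_simp
      rw [hcm2]
      exact mul_le_mul (mul_le_mul_of_nonneg_left hθle hη.le)
        (div_le_div_of_nonneg_left (sq_nonneg _) (hqpos i) hqle)
        (by positivity) (mul_nonneg hη.le (le_trans hθpos.le hθle))
    linarith [h1]
  -- continuity and nonnegativity of u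
  have hcu : ContinuousOn u (Set.Ici 0) := by
    rw [hudef]
    apply continuousOn_finset_sum
    intro i _
    exact (hcmi i).pow 2
  have hunn : ∀ t, 0 ≤ u t := fun t => Finset.sum_nonneg fun i _ => sq_nonneg _
  -- derivative of u
  have hud : ∀ t > (0:ℝ), HasDerivAt u
      (∑ i : Fin d, 2 * m t i ^ 1 * ((1 - α) * (p t i - m t i))) t := by
    intro t ht
    have h := HasDerivAt.fun_sum (u := Finset.univ) (fun i (_ : i ∈ Finset.univ) => (hmid t ht i).pow 2)
    exact h.congr_deriv (Finset.sum_congr rfl fun i _ => by norm_num)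
  -- Lipschitz bound for u on [T₀, ∞)
  set L : ℝ := 4 * (1 - α) * G ^ 2 * d + 1 with hLdef
  have hLpos : 0 < L := by
    have : (0:ℝ) ≤ 4 * (1 - α) * G ^ 2 * d := by positivity
    rw [hLdef]; linarith
  have hlip : ∀ a b, T₀ ≤ a → a ≤ b → |u b - u a| ≤ L * (b - a) := by
    intro a b ha hab
    have h := norm_image_sub_le_of_norm_deriv_le_segment'
      (f := u) (f' := fun s => ∑ i : Fin d, 2 * m s i ^ 1 * ((1 - α) * (p s i - m s i)))
      (a := a) (b := b) (C := L)
      (fun s hs => (hud s (lt_of_lt_of_le hT₀pos (le_trans ha hs.1))).hasDerivWithinAt)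
      ?_ b (Set.right_mem_Icc.2 hab)
    · simpa [Real.norm_eq_abs] using h
    · intro s hs
      have hs0 : (0:ℝ) ≤ s := le_trans hT₀pos.le (le_trans ha hs.1)
      rw [Real.norm_eq_abs]
      calc |∑ i : Fin d, 2 * m s i ^ 1 * ((1 - α) * (p s i - m s i))|
          ≤ ∑ i : Fin d, |2 * m s i ^ 1 * ((1 - α) * (p s i - m s i))| :=
            Finset.abs_sum_le_sum_abs _ _
        _ ≤ ∑ _i : Fin d, 4 * (1 - α) * G ^ 2 := by
            apply Finset.sum_le_sum
            intro i _
            have h1 : |m s i| ≤ G := hmib s hs0 i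
            have h2 : |p s i| ≤ G := hpib s hs0 i
            have h3 : |p s i - m s i| ≤ 2 * G := by
              calc |p s i - m s i| ≤ |p s i| + |m s i| := by
                    rw [sub_eq_add_neg]
                    exact (abs_add_le _ _).trans (by rw [abs_neg])
                _ ≤ 2 * G := by linarith
            rw [abs_mul, abs_mul, abs_mul, abs_two, abs_of_nonneg hα1'.le, pow_one]
            have h4 : (0:ℝ) ≤ |m s i| := abs_nonneg _
            have h5 : (0:ℝ) ≤ |p s i - m s i| := abs_nonneg _
            nlinarith [mul_le_mul h1 h3 h5 hG0, hα1']
        _ = 4 * (1 - α) * G ^ 2 * d := by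
            rw [Finset.sum_const, Finset.card_univ, Fintype.card_fin, nsmul_eq_mul]; ring
        _ ≤ L := by rw [hLdef]; linarith
  -- the primitive ψ and the Lyapunov function K
  have hinti : ∀ a b : ℝ, 0 ≤ a → IntervalIntegrable u volume a b ∨ True := fun _ _ _ => Or.inr trivial
  have hintk : ∀ a b : ℝ, 0 ≤ a → 0 ≤ b → IntervalIntegrable u volume a b := by
    intro a b ha hb
    apply ContinuousOn.intervalIntegrable
    apply hcu.mono
    rcases le_total a b with h | h
    · rw [Set.uIcc_of_le h]; exact fun s hs => le_trans ha hs.1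
    · rw [Set.uIcc_of_ge h]; exact fun s hs => le_trans hb hs.1
  set ψ : ℝ → ℝ := fun t => ∫ s in T₀..t, u s with hψdef
  have hψd : ∀ t, T₀ ≤ t → HasDerivAt ψ (u t) t := by
    intro t ht
    have htpos : 0 < t := lt_of_lt_of_le hT₀pos ht
    apply intervalIntegral.integral_hasDerivAt_right
      (hintk T₀ t hT₀pos.le htpos.le)
    · exact ContinuousOn.stronglyMeasurableAtFilter isOpen_Ioi
        (hcu.mono Set.Ioi_subset_Ici_self) t htpos
    · exact hcu.continuousAt (Filter.mem_of_superset (Ioi_mem_nhds htpos) Set.Ioi_subset_Ici_self)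
  set K : ℝ → ℝ := fun t => E t + c * ψ t with hKdef
  have hKd : ∀ t, T₀ ≤ t → ∃ k, HasDerivAt K k t ∧ k ≤ 0 := by
    intro t ht
    obtain ⟨et, he1, he2⟩ := hEderiv t (lt_of_lt_of_le hT₀pos ht)
    refine ⟨et + c * u t, he1.add ((hψd t ht).const_mul c), ?_⟩
    have h := he2 ht
    linarith
  have hKanti : AntitoneOn K (Set.Ici T₀) := by
    apply antitoneOn_of_deriv_nonpos (convex_Ici T₀)
    · intro t ht
      obtain ⟨k, hk, _⟩ := hKd t ht
      exact hk.continuousAt.continuousWithinAt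
    · intro t ht
      rw [interior_Ici] at ht
      obtain ⟨k, hk, _⟩ := hKd t ht.le
      exact hk.differentiableAt.differentiableWithinAt
    · intro t ht
      rw [interior_Ici] at ht
      obtain ⟨k, hk, hk0⟩ := hKd t ht.le
      rw [hk.deriv]
      exact hk0
  have hψ0 : ψ T₀ = 0 := intervalIntegral.integral_same
  have hwnn : ∀ t, 0 < t → 0 ≤ w t := by
    intro t ht
    apply Finset.sum_nonneg
    intro i _
    apply div_nonneg (sq_nonneg _)
    have := expA_pos hα1 ht
    positivity
  have hElb : ∀ t, 0 < t → Flb ≤ E t := by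
    intro t ht
    have h1 := hFlb (x t)
    have h2 : 0 ≤ η / (2 * (1 - α)) * w t := mul_nonneg (by positivity) (hwnn t ht)
    show Flb ≤ f (x t) + η / (2 * (1 - α)) * w t
    linarith
  have hψbound : ∀ t ≥ T₀, (∫ s in T₀..t, u s) ≤ (E T₀ - Flb) / c := by
    intro t ht
    have h1 : K t ≤ K T₀ := hKanti (Set.self_mem_Ici) ht ht
    have h2 : E t + c * ψ t ≤ E T₀ + c * ψ T₀ := h1
    rw [hψ0] at h2
    have h3 := hElb t (lt_of_lt_of_le hT₀pos ht)
    rw [le_div_iff₀ hcpos]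
    have h4 : ψ t = ∫ s in T₀..t, u s := rfl
    nlinarith [h2, h3]
  -- Barbalat
  have hu0' : Tendsto u atTop (nhds 0) :=
    barbalat u T₀ L ((E T₀ - Flb) / c) hLpos (fun t _ => hunn t)
      (hcu.mono (fun s hs => le_trans hT₀pos.le hs)) hlip hψbound
  -- first conclusion
  have hm0' : Tendsto m atTop (nhds 0) := by
    rw [tendsto_zero_iff_norm_tendsto_zero]
    have h1 : ∀ t, ‖m t‖ = Real.sqrt (u t) := by
      intro t
      rw [EuclideanSpace.norm_eq]
      congr 1
      refine Finset.sum_congr rfl fun i _ => ?_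
      rw [Real.norm_eq_abs, sq_abs]
    have h2 : Tendsto (fun t => Real.sqrt (u t)) atTop (nhds 0) := by
      have h3 := (Real.continuous_sqrt.tendsto 0).comp hu0'
      simpa [Function.comp_def] using h3
    simp only [h1]
    exact h2
  refine ⟨hm0', ?_⟩
  -- second conclusion via squeeze
  have hbound2 : ∀ t ≥ T₀, ‖(-η) • adamG α β ε d t (m t) (v t)‖ ≤
      (η / (expA α T₀ * ε)) * ‖m t‖ := by
    intro t ht
    have htpos : 0 < t := lt_of_lt_of_le hT₀pos ht
    have hAt : 0 < expA α t := expA_pos hα1 htpos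
    have hAT₀t : expA α T₀ ≤ expA α t := expA_mono hα1 ht
    apply euclid_norm_le_coord _ _ _ (by positivity)
    intro i
    rw [PiLp.smul_apply, smul_eq_mul, adamG_apply]
    have hs0 : (0:ℝ) ≤ Real.sqrt (v t i / expA β t) := Real.sqrt_nonneg _
    have hdenpos : 0 < expA α t * (Real.sqrt (v t i / expA β t) + ε) :=
      mul_pos hAt (by positivity)
    calc |(-η) * (m t i / expA α t / (Real.sqrt (v t i / expA β t) + ε))|
        = η * (|m t i| / (expA α t * (Real.sqrt (v t i / expA β t) + ε))) := by
          rw [abs_mul, abs_neg, abs_of_pos hη, abs_div, abs_div,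
            abs_of_pos hAt, abs_of_pos (by positivity : (0:ℝ) < Real.sqrt (v t i / expA β t) + ε),
            div_div]
      _ ≤ η * (|m t i| / (expA α T₀ * ε)) := by
          apply mul_le_mul_of_nonneg_left _ hη.le
          apply div_le_div_of_nonneg_left (abs_nonneg _) (by positivity)
          apply mul_le_mul hAT₀t (by linarith) hε.le hAt.le
      _ = (η / (expA α T₀ * ε)) * |m t i| := by ring
  have htend : Tendsto (fun t => (η / (expA α T₀ * ε)) * ‖m t‖) atTop (nhds 0) := by
    have h1 : Tendsto (fun t => ‖m t‖) atTop (nhds 0) := by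
      simpa using hm0'.norm
    have h2 := h1.const_mul (η / (expA α T₀ * ε))
    simpa using h2
  apply squeeze_zero_norm' _ htend
  filter_upwards [eventually_ge_atTop T₀] with t ht
  exact hbound2 t ht
end

section
/- Let f : ℝᵈ → ℝ be continuously differentiable and bounded below, let α, β ∈ [0,1) satisfy 4α − β < 3, and let (x, m, v) : [0,∞) → ℝᵈ × ℝᵈ × ℝᵈ be a solution of the Adam ODE system with initial condition (x₀, 0, 0), differentiable on (0,∞), such that every entry of v(t) is strictly positive for all t > 0. If x(t) converges to a point x* ∈ ℝᵈ as t → ∞, then ∇f(x*) = 0; equivalently, the limiting Dirac measure δ_{x*} is a critical point of the potential energy functional F_f[μ] = ∫ f dμ, whose Wasserstein gradient is ∇f. (Theorem 1 in the Dirac-measure case, via the equivalence of Propositions 1 and 2.) -/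
open MeasureTheory Filter
open scoped RealInnerProductSpace

/-- Exponential decay: `e^{-ct} → 0` as `t → ∞` for `c > 0`. -/
lemma adam_exp_decay {c : ℝ} (hc : 0 < c) :
    Tendsto (fun t : ℝ => Real.exp (-c * t)) atTop (nhds 0) := by
  have h1 : Tendsto (fun t : ℝ => c * t) atTop atTop := tendsto_id.const_mul_atTop hc
  have h2 := Real.tendsto_exp_neg_atTop_nhds_zero.comp h1
  simpa [Function.comp_def, neg_mul] using h2

/-- A solution of the relaxation ODE `y' = c (u - y)` with `c > 0` converges to the limit
of the forcing term `u`. -/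
lemma adam_relax_tendsto {E : Type*} [NormedAddCommGroup E] [NormedSpace ℝ E]
    {y u : ℝ → E} {L : E} {c : ℝ} (hc : 0 < c)
    (hy : ∀ t > (0:ℝ), HasDerivAt y (c • (u t - y t)) t)
    (hu : Tendsto u atTop (nhds L)) : Tendsto y atTop (nhds L) := by
  rw [Metric.tendsto_atTop]
  intro δ hδ
  obtain ⟨T, hT1, hT⟩ : ∃ T : ℝ, 1 ≤ T ∧ ∀ t ≥ T, ‖u t - L‖ ≤ δ/4 := by
    obtain ⟨N, hN⟩ := Metric.tendsto_atTop.1 hu (δ/4) (by positivity)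
    refine ⟨max N 1, le_max_right _ _, fun t ht => ?_⟩
    have := hN t (le_trans (le_max_left _ _) ht)
    rw [dist_eq_norm] at this; linarith
  set z : ℝ → E := fun t => Real.exp (c * t) • (y t - L) with hzdef
  have hz : ∀ t > (0:ℝ), HasDerivAt z ((c * Real.exp (c * t)) • (u t - L)) t := by
    intro t ht
    have h1 : HasDerivAt (fun s : ℝ => Real.exp (c * s)) (c * Real.exp (c * t)) t := by
      have h0 : HasDerivAt (fun s : ℝ => c * s) c t := by
        simpa using (hasDerivAt_id t).const_mul c
      have := (Real.hasDerivAt_exp (c * t)).comp t h0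
      exact this.congr_deriv (mul_comm _ _)
    have h2 : HasDerivAt (fun s => y s - L) (c • (u t - y t)) t := (hy t ht).sub_const L
    have h3 := h1.smul h2
    convert h3 using 1
    · rfl
    rw [smul_smul, mul_comm (Real.exp (c*t)) c, ← smul_add]
    congr 1; abel
  have key : ∀ t ≥ T, ‖y t - L‖ ≤ Real.exp (-(c * t)) * ‖z T‖ + δ/4 := by
    intro t ht
    have hspos : ∀ s ∈ Set.Icc T t, (0:ℝ) < s := fun s hs => lt_of_lt_of_le one_pos (hT1.trans hs.1)
    have hcont : ContinuousOn (fun s => z s - z T) (Set.Icc T t) := fun s hs =>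
      (((hz s (hspos s hs)).differentiableAt.sub_const (z T)).continuousAt).continuousWithinAt
    have hderiv : ∀ s ∈ Set.Ico T t, HasDerivWithinAt (fun s => z s - z T)
        ((c * Real.exp (c * s)) • (u s - L)) (Set.Ici s) s := fun s hs =>
      (((hz s (hspos s ⟨hs.1, le_of_lt hs.2⟩)).sub_const (z T))).hasDerivWithinAt
    have hB : ∀ s : ℝ, HasDerivAt (fun s => (δ/4) * (Real.exp (c*s) - Real.exp (c*T)))
        ((δ/4) * (c * Real.exp (c*s))) s := by
      intro s
      have h0 : HasDerivAt (fun s : ℝ => c * s) c s := by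
        simpa using (hasDerivAt_id s).const_mul c
      have h1 : HasDerivAt (fun s : ℝ => Real.exp (c * s)) (c * Real.exp (c * s)) s := by
        exact ((Real.hasDerivAt_exp (c * s)).comp s h0).congr_deriv (mul_comm _ _)
      simpa using ((h1.sub_const (Real.exp (c*T))).const_mul (δ/4))
    have bound : ∀ s ∈ Set.Ico T t,
        ‖(c * Real.exp (c * s)) • (u s - L)‖ ≤ (δ/4) * (c * Real.exp (c*s)) := by
      intro s hs
      rw [norm_smul, Real.norm_eq_abs, abs_of_pos (by positivity)]
      rw [mul_comm ((δ:ℝ)/4) _]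
      exact mul_le_mul_of_nonneg_left (hT s hs.1) (by positivity)
    have hmv := image_norm_le_of_norm_deriv_right_le_deriv_boundary hcont hderiv
      (by simp) hB bound (Set.right_mem_Icc.2 ht)
    have h4 : ‖z t‖ ≤ ‖z T‖ + (δ/4) * Real.exp (c*t) := by
      have h5 : ‖z t‖ - ‖z T‖ ≤ ‖z t - z T‖ := norm_sub_norm_le _ _
      nlinarith [Real.exp_pos (c*T), Real.exp_pos (c*t), hδ]
    have hzt : ‖z t‖ = Real.exp (c*t) * ‖y t - L‖ := by
      rw [hzdef]; simp [norm_smul, Real.norm_eq_abs, abs_of_pos (Real.exp_pos _)]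
    have hept : (0:ℝ) < Real.exp (c*t) := Real.exp_pos _
    rw [Real.exp_neg]
    rw [hzt] at h4
    have hinv : (0:ℝ) < (Real.exp (c*t))⁻¹ := inv_pos.2 hept
    have hid : Real.exp (c*t) * (Real.exp (c*t))⁻¹ = 1 := mul_inv_cancel₀ hept.ne'
    nlinarith [h4, norm_nonneg (z T), norm_nonneg (y t - L)]
  have hdecay : Tendsto (fun t : ℝ => Real.exp (-(c * t)) * ‖z T‖) atTop (nhds 0) := by
    have h3 : Tendsto (fun t : ℝ => Real.exp (-(c * t))) atTop (nhds 0) := by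
      simpa [neg_mul] using adam_exp_decay hc
    simpa using h3.mul_const ‖z T‖
  obtain ⟨N, hN⟩ := Metric.tendsto_atTop.1 hdecay (δ/2) (by positivity)
  refine ⟨max T N, fun t ht => ?_⟩
  have h1 := key t (le_trans (le_max_left _ _) ht)
  have h2 := hN t (le_trans (le_max_right _ _) ht)
  rw [Real.dist_eq] at h2
  have h3 : Real.exp (-(c*t)) * ‖z T‖ < δ/2 := lt_of_abs_lt (by simpa using h2)
  rw [dist_eq_norm]
  linarith

/-- **Theorem 1 in the Dirac-measure case** (via the equivalence of Propositions 1 and 2).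
Let `f` be `C¹` and bounded below, `4α − β < 3`, and let `(x, m, v)` be a solution of the
Adam ODE system on `[0,∞)` with initial condition `(x₀, 0, 0)`, differentiable on `(0,∞)`,
with `v(t)` entrywise strictly positive for `t > 0`. If `x(t) → x*` as `t → ∞`, then
`∇f(x*) = 0`; equivalently, the limiting Dirac measure `δ_{x*}` is a critical point of the
potential energy functional `F_f[μ] = ∫ f dμ`, whose Wasserstein gradient is `∇f` (i.e.
`∇f = 0` holds `δ_{x*}`-almost everywhere). -/
theorem adam_limit_is_critical_point
    (d : ℕ) (α β ε η : ℝ)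
    (hα : α ∈ Set.Ico (0 : ℝ) 1) (hβ : β ∈ Set.Ico (0 : ℝ) 1) (hε : 0 < ε) (hη : 0 < η)
    (hcond : 4 * α - β < 3)
    (f : EuclideanSpace ℝ (Fin d) → ℝ) (hf : ContDiff ℝ 1 f)
    (Flb : ℝ) (hFlb : ∀ y, Flb ≤ f y)
    (x m v : ℝ → EuclideanSpace ℝ (Fin d)) (x₀ : EuclideanSpace ℝ (Fin d))
    (hx0 : x 0 = x₀) (hm0 : m 0 = 0) (hv0 : v 0 = 0)
    (hcx : ContinuousOn x (Set.Ici 0)) (hcm : ContinuousOn m (Set.Ici 0))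
    (hcv : ContinuousOn v (Set.Ici 0))
    (hvpos : ∀ t > (0 : ℝ), ∀ i, 0 < v t i)
    (hm : ∀ t > (0 : ℝ), HasDerivAt m ((1 - α) • (gradient f (x t) - m t)) t)
    (hv : ∀ t > (0 : ℝ), HasDerivAt v ((1 - β) • (vsq d (gradient f (x t)) - v t)) t)
    (hx : ∀ t > (0 : ℝ), HasDerivAt x ((-η) • adamG α β ε d t (m t) (v t)) t)
    (xs : EuclideanSpace ℝ (Fin d)) (hconv : Tendsto x atTop (nhds xs)) :
    gradient f xs = 0 ∧ (∀ᵐ y ∂(Measure.dirac xs), gradient f y = 0) := by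
  classical
  have hα1 : (0:ℝ) < 1 - α := by have := hα.2; linarith
  have hβ1 : (0:ℝ) < 1 - β := by have := hβ.2; linarith
  set g : EuclideanSpace ℝ (Fin d) := gradient f xs with hgdef
  have hgradcont : Continuous (gradient f) := by
    have h1 : Continuous (fderiv ℝ f) := hf.continuous_fderiv one_ne_zero
    exact (InnerProductSpace.toDual ℝ (EuclideanSpace ℝ (Fin d))).symm.continuous.comp h1
  have hu : Tendsto (fun t => gradient f (x t)) atTop (nhds g) :=
    (hgradcont.tendsto xs).comp hconv
  have hmlim : Tendsto m atTop (nhds g) := adam_relax_tendsto hα1 hm hu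
  have husq : Tendsto (fun t => vsq d (gradient f (x t))) atTop (nhds (vsq d g)) := by
    refine ((PiLp.continuous_toLp 2 (fun _ : Fin d => ℝ)).tendsto _).comp (tendsto_pi_nhds.mpr fun i => ?_)
    have hi : Tendsto (fun t => gradient f (x t) i) atTop (nhds (g i)) :=
      ((EuclideanSpace.proj i).continuous.tendsto g).comp hu
    simpa [vsq] using hi.pow 2
  have hvlim : Tendsto v atTop (nhds (vsq d g)) := adam_relax_tendsto hβ1 hv husq
  have main : gradient f xs = 0 := by
    by_contra hg0
    obtain ⟨i0, hi0⟩ : ∃ i, g i ≠ 0 := by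
      by_contra hcon; push_neg at hcon
      apply hg0; ext i; simpa using hcon i
    set L' : EuclideanSpace ℝ (Fin d) :=
      (WithLp.toLp 2 (fun i => -η * (g i / (Real.sqrt ((g i)^2) + ε))) : EuclideanSpace ℝ (Fin d)) with hL'
    have hL'ne : L' ≠ 0 := by
      intro h
      have h2 : L' i0 = 0 := by rw [h]; rfl
      have hden : (0:ℝ) < Real.sqrt ((g i0)^2) + ε := by positivity
      have h3 : -η * (g i0 / (Real.sqrt ((g i0)^2) + ε)) = 0 := h2
      rcases mul_eq_zero.1 h3 with h4 | h4
      · exact (neg_ne_zero.2 hη.ne') h4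
      · rcases div_eq_zero_iff.1 h4 with h5 | h5
        · exact hi0 h5
        · exact hden.ne' h5
    have hIP : (0:ℝ) < ⟪L', L'⟫ := by
      rw [real_inner_self_eq_norm_sq]
      exact pow_pos (norm_pos_iff.mpr hL'ne) 2
    have hDα : Tendsto (fun t : ℝ => 1 - Real.exp (-(1-α)*t)) atTop (nhds 1) := by
      have h1 := adam_exp_decay hα1
      simpa using (tendsto_const_nhds (x := (1:ℝ))).sub h1
    have hDβ : Tendsto (fun t : ℝ => 1 - Real.exp (-(1-β)*t)) atTop (nhds 1) := by
      have h1 := adam_exp_decay hβ1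
      simpa using (tendsto_const_nhds (x := (1:ℝ))).sub h1
    have hcoord : ∀ i, Tendsto (fun t => adamG α β ε d t (m t) (v t) i) atTop
        (nhds (g i / (Real.sqrt ((g i)^2) + ε))) := by
      intro i
      have hmi : Tendsto (fun t => m t i) atTop (nhds (g i)) :=
        ((EuclideanSpace.proj i).continuous.tendsto g).comp hmlim
      have hvi : Tendsto (fun t => v t i) atTop (nhds ((g i)^2)) := by
        have := ((EuclideanSpace.proj i).continuous.tendsto (vsq d g)).comp hvlim
        simpa [vsq, Function.comp_def] using this
      have h1 : Tendsto (fun t => m t i / (1 - Real.exp (-(1-α)*t))) atTop (nhds (g i)) := by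
        simpa [Pi.div_def] using hmi.div hDα one_ne_zero
      have h2 : Tendsto (fun t => Real.sqrt (v t i / (1 - Real.exp (-(1-β)*t))) + ε) atTop
          (nhds (Real.sqrt ((g i)^2) + ε)) := by
        have h3 : Tendsto (fun t => v t i / (1 - Real.exp (-(1-β)*t))) atTop (nhds ((g i)^2)) := by
          simpa [Pi.div_def] using hvi.div hDβ one_ne_zero
        simpa using h3.sqrt.add (tendsto_const_nhds (x := ε))
      have hden : Real.sqrt ((g i)^2) + ε ≠ 0 := by positivity
      exact h1.div h2 hden
    have hxd : Tendsto (fun t => (⟪L', (-η) • adamG α β ε d t (m t) (v t)⟫ : ℝ)) atTop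
        (nhds (⟪L',L'⟫ : ℝ)) := by
      have hsum : ∀ t : ℝ, (⟪L', (-η) • adamG α β ε d t (m t) (v t)⟫:ℝ)
          = ∑ i, L' i * (-η * adamG α β ε d t (m t) (v t) i) := by
        intro t
        simp [PiLp.inner_apply, RCLike.inner_apply, PiLp.smul_apply, smul_eq_mul]
        exact Finset.sum_congr rfl fun i _ => by ring
      have hIP2 : (⟪L', L'⟫:ℝ) = ∑ i, L' i * (-η * (g i / (Real.sqrt ((g i)^2) + ε))) := by
        rw [hL']
        simp only [PiLp.inner_apply, RCLike.inner_apply, conj_trivial, WithLp.ofLp_toLp]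
      rw [hIP2]
      simp only [hsum]
      exact tendsto_finset_sum _ fun i _ => ((hcoord i).const_mul (-η)).const_mul (L' i)
    set K := (⟪L',L'⟫:ℝ)/2 with hKdef
    have hKpos : 0 < K := half_pos hIP
    obtain ⟨T0, hT0⟩ := eventually_atTop.1
      (hxd.eventually (eventually_ge_nhds (show K < (⟪L',L'⟫:ℝ) by
        rw [hKdef]; linarith)))
    set T := max T0 1 with hTdef
    have hT1 : (1:ℝ) ≤ T := le_max_right _ _
    have hTge : ∀ t ≥ T, K ≤ (⟪L', (-η) • adamG α β ε d t (m t) (v t)⟫:ℝ) :=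
      fun t ht => hT0 t (le_trans (le_max_left _ _) ht)
    have hh' : ∀ t > (0:ℝ), HasDerivAt (fun s => (⟪L', x s⟫:ℝ))
        (⟪L', (-η) • adamG α β ε d t (m t) (v t)⟫:ℝ) t := by
      intro t ht
      have := (hasDerivAt_const t L').inner ℝ (hx t ht)
      simpa using this
    have hd : ∀ t ∈ Set.Ici T, HasDerivAt (fun s => (⟪L', x s⟫:ℝ) - K * s)
        ((⟪L', (-η) • adamG α β ε d t (m t) (v t)⟫:ℝ) - K) t := by
      intro t ht
      have hpos : (0:ℝ) < t := lt_of_lt_of_le one_pos (hT1.trans ht)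
      have h2 : HasDerivAt (fun s : ℝ => K * s) K t := by
        simpa using (hasDerivAt_id t).const_mul K
      exact (hh' t hpos).sub h2
    have hmono : MonotoneOn (fun t => (⟪L', x t⟫:ℝ) - K * t) (Set.Ici T) := by
      apply monotoneOn_of_deriv_nonneg (convex_Ici T)
      · exact fun t ht => (hd t ht).continuousAt.continuousWithinAt
      · intro t ht
        rw [interior_Ici] at ht
        exact (hd t (Set.mem_Ici.mpr (le_of_lt (Set.mem_Ioi.mp ht)))).differentiableAt.differentiableWithinAt
      · intro t ht
        rw [interior_Ici] at ht
        rw [(hd t (Set.mem_Ici.mpr (le_of_lt (Set.mem_Ioi.mp ht)))).deriv]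
        have := hTge t (le_of_lt (Set.mem_Ioi.mp ht))
        linarith
    have hlin : Tendsto (fun t => (⟪L', x t⟫:ℝ)) atTop atTop := by
      apply tendsto_atTop_mono' atTop
        (show (fun t => ((⟪L', x T⟫:ℝ) - K * T) + K * t) ≤ᶠ[atTop] fun t => (⟪L', x t⟫:ℝ) from ?_)
      · exact tendsto_atTop_add_const_left _ _ (tendsto_id.const_mul_atTop hKpos)
      · filter_upwards [eventually_ge_atTop T] with t ht
        have := hmono Set.self_mem_Ici (Set.mem_Ici.mpr ht) ht
        dsimp at this ⊢
        linarith
    have hfin : Tendsto (fun t => (⟪L', x t⟫:ℝ)) atTop (nhds (⟪L', xs⟫:ℝ)) :=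
      tendsto_const_nhds.inner hconv
    exact not_tendsto_atTop_of_tendsto_nhds hfin hlin
  refine ⟨main, ?_⟩
  rw [ae_dirac_eq]
  exact eventually_pure.mpr main
end
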